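/- Let d, L ≥ 1 be integers, let Σ^{xx}, Σ^{yx} ∈ ℝ^{d×d} be diagonal with strictly positive diagonal entries, and let U ∈ ℝ^{d×d} be orthogonal. Let ω : ℝ → ℝ^{d×d} be differentiable, with ω(t) diagonal with strictly positive diagonal entries for every t, satisfying ω'(t) = ω(t)^L Σ^{yx} − ω(t)^{2L+1} Σ^{xx}. Define W̄(t) = U ω(t)^L and V(t) = ω(t) Uᵀ. Then for all t: d/dt V(t) = Σ^{yx} W̄(t)ᵀ − V(t) W̄(t) Σ^{xx} W̄(t)ᵀ; moreover, ω̄(t) := ω(t)^L satisfies ω̄'(t) = L(ω̄(t)^{2−1/L} Σ^{yx} − ω̄(t)³ Σ^{xx}). -/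

import Mathlib

open Matrix

/-- Entrywise (diagonal) real power of a diagonal matrix with positive diagonal:
`(diagRpow A r) i i = (A i i) ^ r` and the off-diagonal entries vanish. -/
noncomputable def diagRpow {d : ℕ} (A : Matrix (Fin d) (Fin d) ℝ) (r : ℝ) :
    Matrix (Fin d) (Fin d) ℝ :=
  Matrix.of fun i j => if i = j then A i i ^ r else 0

lemma diagRpow_eq_diagonal {d : ℕ} (A : Matrix (Fin d) (Fin d) ℝ) (r : ℝ) :
    diagRpow A r = Matrix.diagonal (fun i => A i i ^ r) := by
  ext i j
  simp [diagRpow, Matrix.diagonal]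

/-- **The balanced ansatz solves the MAE decoder equation.**
Let `Σ^{xx}, Σ^{yx}` be diagonal positive, `U` orthogonal, and let `ω(t)` be
diagonal with positive diagonal entries satisfying
`ω' = ω^L Σ^{yx} - ω^{2L+1} Σ^{xx}`.  Then `W̄(t) = U ω(t)^L` and
`V(t) = ω(t) Uᵀ` satisfy the decoder gradient-flow equation
`d/dt V = Σ^{yx} W̄ᵀ - V W̄ Σ^{xx} W̄ᵀ`; moreover `ω̄ := ω^L` satisfies
`ω̄' = L (ω̄^{2-1/L} Σ^{yx} - ω̄³ Σ^{xx})`. -/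
theorem mae_ansatz_decoder (d L : ℕ) (hd : 1 ≤ d) (hL : 1 ≤ L)
    (Sxx Syx : Matrix (Fin d) (Fin d) ℝ)
    (hSxx_diag : Sxx.IsDiag) (hSyx_diag : Syx.IsDiag)
    (hSxx_pos : ∀ i, 0 < Sxx i i) (hSyx_pos : ∀ i, 0 < Syx i i)
    (U : Matrix (Fin d) (Fin d) ℝ) (hU_orth : Uᵀ * U = 1)
    (ω : ℝ → Matrix (Fin d) (Fin d) ℝ)
    (hdiag : ∀ t, (ω t).IsDiag) (hpos : ∀ t i, 0 < ω t i i)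
    (hode : ∀ (t : ℝ) (i j : Fin d),
      HasDerivAt (fun s => ω s i j)
        ((ω t ^ L * Syx - ω t ^ (2 * L + 1) * Sxx) i j) t) :
    (∀ (t : ℝ) (i j : Fin d),
      HasDerivAt (fun s => (ω s * Uᵀ) i j)
        ((Syx * (U * ω t ^ L)ᵀ
          - (ω t * Uᵀ) * (U * ω t ^ L) * Sxx * (U * ω t ^ L)ᵀ) i j) t) ∧
    (∀ (t : ℝ) (i j : Fin d),
      HasDerivAt (fun s => (ω s ^ L) i j)
        ((L : ℝ) *
          ((diagRpow (ω t ^ L) ((2 : ℝ) - 1 / L) * Syx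
            - (ω t ^ L) ^ 3 * Sxx) i j)) t) := by
  have hSxx : Sxx = Matrix.diagonal Sxx.diag := hSxx_diag.diagonal_diag.symm
  have hSyx : Syx = Matrix.diagonal Syx.diag := hSyx_diag.diagonal_diag.symm
  have hωd : ∀ t, ω t = Matrix.diagonal (ω t).diag := fun t =>
    (hdiag t).diagonal_diag.symm
  constructor
  · intro t i j
    have key : Syx * (U * ω t ^ L)ᵀ
        - (ω t * Uᵀ) * (U * ω t ^ L) * Sxx * (U * ω t ^ L)ᵀ
        = (ω t ^ L * Syx - ω t ^ (2 * L + 1) * Sxx) * Uᵀ := by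
      set a := (ω t).diag with ha
      set x := Sxx.diag with hx
      set y := Syx.diag with hy
      rw [hSxx, hSyx, hωd t, Matrix.transpose_mul]
      simp only [Matrix.diagonal_pow, Matrix.diagonal_transpose]
      have hUU : ∀ (A B : Matrix (Fin d) (Fin d) ℝ),
          A * Uᵀ * (U * B) = A * B := by
        intro A B
        rw [mul_assoc A, ← mul_assoc Uᵀ, hU_orth, one_mul]
      have e1 : Matrix.diagonal y * (Matrix.diagonal (a ^ L) * Uᵀ)
          = Matrix.diagonal (a ^ L * y) * Uᵀ := by
        rw [← mul_assoc, Matrix.diagonal_mul_diagonal]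
        congr 1
        rw [Matrix.diagonal_eq_diagonal_iff]
        intro k
        simp only [Pi.mul_apply, Pi.pow_apply]
        ring
      have e2 : Matrix.diagonal a * Uᵀ * (U * Matrix.diagonal (a ^ L))
            * Matrix.diagonal x * (Matrix.diagonal (a ^ L) * Uᵀ)
          = Matrix.diagonal (a ^ (2 * L + 1) * x) * Uᵀ := by
        rw [hUU, Matrix.diagonal_mul_diagonal, Matrix.diagonal_mul_diagonal,
          ← mul_assoc, Matrix.diagonal_mul_diagonal]
        congr 1
        rw [Matrix.diagonal_eq_diagonal_iff]
        intro k
        simp only [Pi.mul_apply, Pi.pow_apply]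
        ring
      rw [e1, e2, Matrix.sub_mul, Matrix.diagonal_mul_diagonal,
        Matrix.diagonal_mul_diagonal]
      rfl
    rw [key]
    simp only [Matrix.mul_apply, Matrix.transpose_apply]
    exact HasDerivAt.fun_sum fun k _ => (hode t i k).mul_const (U j k)
  · intro t i j
    have hfun : (fun s => (ω s ^ L) i j)
        = fun s => if i = j then (ω s i i) ^ L else 0 := by
      funext s
      rw [hωd s, Matrix.diagonal_pow]
      by_cases h : i = j
      · subst h; simp [Matrix.diagonal_apply_eq]
      · simp [Matrix.diagonal_apply_ne _ h, h]
    rw [hfun]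
    by_cases h : i = j
    · subst h
      simp only [if_pos rfl]
      have hD := (hode t i i).pow L
      have hentry : (ω t ^ L * Syx - ω t ^ (2 * L + 1) * Sxx) i i
          = (ω t i i) ^ L * Syx i i - (ω t i i) ^ (2 * L + 1) * Sxx i i := by
        rw [hSxx, hSyx, hωd t]
        simp only [Matrix.diagonal_pow, Matrix.diagonal_mul_diagonal,
          Matrix.sub_apply, Matrix.diagonal_apply_eq]
        simp [Matrix.diag]
      rw [hentry] at hD
      convert hD using 1
      case e'_4 => rfl
      case e'_5 => rfl
      case e'_8 => funext s; simp
      have htarget : (diagRpow (ω t ^ L) ((2 : ℝ) - 1 / L) * Syx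
            - (ω t ^ L) ^ 3 * Sxx) i i
          = ((ω t i i) ^ L : ℝ) ^ (((2 : ℝ) - 1 / L)) * Syx i i
            - (ω t i i) ^ (3 * L) * Sxx i i := by
        rw [diagRpow_eq_diagonal, hSxx, hSyx, hωd t]
        simp only [Matrix.diagonal_pow, Matrix.diagonal_mul_diagonal,
          Matrix.sub_apply, Matrix.diagonal_apply_eq, ← pow_mul]
        simp [Matrix.diag]
        left
        rw [mul_comm L 3]
      rw [htarget]
      have ha : (0 : ℝ) < ω t i i := hpos t i
      have hLne : (L : ℝ) ≠ 0 := Nat.cast_ne_zero.mpr (by omega)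
      have hrpow : ((ω t i i) ^ L : ℝ) ^ (((2 : ℝ) - 1 / L))
          = (ω t i i) ^ (2 * L - 1) := by
        rw [← Real.rpow_natCast (ω t i i) L, ← Real.rpow_mul ha.le]
        have : (L : ℝ) * ((2 : ℝ) - 1 / L) = ((2 * L - 1 : ℕ) : ℝ) := by
          push_cast [Nat.cast_sub (by omega : 1 ≤ 2 * L)]
          field_simp
        rw [this, Real.rpow_natCast]
      rw [hrpow]
      have h1 : (ω t i i) ^ (L - 1) * (ω t i i) ^ L = (ω t i i) ^ (2 * L - 1) := by
        rw [← pow_add]; congr 1; omega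
      have h2 : (ω t i i) ^ (L - 1) * (ω t i i) ^ (2 * L + 1)
          = (ω t i i) ^ (3 * L) := by
        rw [← pow_add]; congr 1; omega
      rw [← h1, ← h2]
      ring
    · simp only [if_neg h]
      have : ((L : ℝ) *
          ((diagRpow (ω t ^ L) ((2 : ℝ) - 1 / L) * Syx
            - (ω t ^ L) ^ 3 * Sxx) i j)) = 0 := by
        rw [diagRpow_eq_diagonal, hSxx, hSyx, hωd t]
        simp only [Matrix.diagonal_pow, Matrix.diagonal_mul_diagonal,
          Matrix.sub_apply]
        simp [Matrix.diagonal_apply_ne _ h]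
      rw [this]
      exact hasDerivAt_const t 0
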